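/- arXiv:1303.5118 — 3 statements merged into one kernel-verified Lean document; each statement's English description precedes it below -/
import Mathlib

section
/- If (dω)² ≤ 1 and v·ω > 0, then v·v̇ ≤ ((1 + (v d)²)/d)·V_x·|v|·|ω| ≤ ((1 + (v d)²)/d)·V_x·|v|/d, so v² satisfies a differential inequality with right-hand side affine-quadratic in v², hence the Lipschitz bound needed for global existence. -/
theorem vdot_bound (d Vx v ω : ℝ) (hd : 0 < d) (hVx : 0 < Vx)
    (hω : (d * ω) ^ 2 ≤ 1) (hvω : 0 < v * ω) :
    v * (((1 + (v * d) ^ 2) / d) * Vx * (Real.sqrt (1 + (v * d) ^ 2) * ω - v)) ≤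
      ((1 + (v * d) ^ 2) / d) * Vx * |v| * |ω| ∧
    ((1 + (v * d) ^ 2) / d) * Vx * |v| * |ω| ≤
      ((1 + (v * d) ^ 2) / d) * Vx * |v| / d := by
  set s := Real.sqrt (1 + (v * d) ^ 2) with hs
  have hC : 0 < (1 + (v * d) ^ 2) / d * Vx := by positivity
  have hsnn : 0 ≤ s := Real.sqrt_nonneg _
  have hs2 : s ^ 2 = 1 + (v * d) ^ 2 := Real.sq_sqrt (by positivity)
  have hsle : s ≤ 1 + |v| * d := by
    rw [hs]
    have : 1 + (v * d) ^ 2 ≤ (1 + |v| * d) ^ 2 := by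
      have h1 : (v * d) ^ 2 = (|v| * d) ^ 2 := by rw [mul_pow, mul_pow, sq_abs]
      nlinarith [abs_nonneg v, hd.le, mul_nonneg (abs_nonneg v) hd.le]
    calc Real.sqrt (1 + (v * d) ^ 2) ≤ Real.sqrt ((1 + |v| * d) ^ 2) :=
          Real.sqrt_le_sqrt this
      _ = 1 + |v| * d := Real.sqrt_sq (by positivity)
  have hωd : d * |ω| ≤ 1 := by
    have h1 : |d * ω| = d * |ω| := by rw [abs_mul, abs_of_pos hd]
    nlinarith [sq_abs (d * ω), abs_nonneg (d * ω), h1]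
  have hvωabs : v * ω = |v| * |ω| := by
    rw [← abs_mul]; exact (abs_of_pos hvω).symm
  constructor
  · have key : s * (v * ω) - v ^ 2 ≤ |v| * |ω| := by
      rw [hvωabs]
      nlinarith [abs_nonneg v, abs_nonneg ω, sq_abs v, mul_nonneg (abs_nonneg v) (abs_nonneg ω),
        mul_le_mul_of_nonneg_right hsle (mul_nonneg (abs_nonneg v) (abs_nonneg ω))]
    nlinarith [mul_le_mul_of_nonneg_left key hC.le]
  · have : |v| * |ω| ≤ |v| / d := by
      rw [div_eq_mul_inv]
      have := mul_le_mul_of_nonneg_left hωd (abs_nonneg v)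
      calc |v| * |ω| = |v| * (d * |ω|) * d⁻¹ := by field_simp
        _ ≤ |v| * 1 * d⁻¹ := by
            apply mul_le_mul_of_nonneg_right _ (by positivity)
            nlinarith
        _ = |v| * d⁻¹ := by ring
    calc (1 + (v * d) ^ 2) / d * Vx * |v| * |ω|
        = (1 + (v * d) ^ 2) / d * Vx * (|v| * |ω|) := by ring
      _ ≤ (1 + (v * d) ^ 2) / d * Vx * (|v| / d) := by
          exact mul_le_mul_of_nonneg_left this hC.le
      _ = (1 + (v * d) ^ 2) / d * Vx * |v| / d := by ring
end

section
/- With ξ̇ = −β·σ((C₀/β)(ξ + ρ·σ(C₂ y₂))), β, C₀, ρ, C₂ > 0: whenever |ξ| > (3/2)ρ, one has ξ·ξ̇ < −(ρ/2)·β·σ(C₀ρ/(2β)) < 0. -/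
noncomputable def sat (x : ℝ) : ℝ := x / max 1 |x|

lemma sat_denom_pos (x : ℝ) : (0:ℝ) < max 1 |x| :=
  lt_of_lt_of_le one_pos (le_max_left _ _)

lemma sat_pos {x : ℝ} (h : 0 < x) : 0 < sat x :=
  div_pos h (sat_denom_pos x)

lemma sat_abs_le_one (x : ℝ) : |sat x| ≤ 1 := by
  unfold sat
  rw [abs_div, abs_of_pos (sat_denom_pos x), div_le_one (sat_denom_pos x)]
  exact le_max_right _ _

lemma sat_neg (x : ℝ) : sat (-x) = - sat x := by
  unfold sat; rw [abs_neg, neg_div]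

lemma sat_mono : Monotone sat := by
  intro x y hxy
  unfold sat
  rw [div_le_div_iff₀ (sat_denom_pos x) (sat_denom_pos y)]
  rcases abs_cases x with ⟨ex, sx⟩ | ⟨ex, sx⟩ <;>
    rcases abs_cases y with ⟨ey, sy⟩ | ⟨ey, sy⟩ <;>
    rw [ex, ey] <;>
    rcases max_cases 1 |x| with ⟨e1, l1⟩ | ⟨e1, l1⟩ <;>
    rcases max_cases 1 |y| with ⟨e2, l2⟩ | ⟨e2, l2⟩ <;>
    rw [ex] at * <;> rw [ey] at * <;> rw [e1, e2] <;> nlinarith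

theorem xi_decrease (ξ y₂ β C₀ ρ C₂ : ℝ)
    (hβ : 0 < β) (hC₀ : 0 < C₀) (hρ : 0 < ρ) (hC₂ : 0 < C₂)
    (hξ : (3 / 2) * ρ < |ξ|) :
    ξ * (-β * sat ((C₀ / β) * (ξ + ρ * sat (C₂ * y₂)))) <
      -(ρ / 2) * β * sat (C₀ * ρ / (2 * β)) ∧
    -(ρ / 2) * β * sat (C₀ * ρ / (2 * β)) < 0 := by
  set s := sat (C₂ * y₂) with hs
  set t := sat (C₀ * ρ / (2 * β)) with hts
  have ht : 0 < t := sat_pos (by positivity)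
  have habs := sat_abs_le_one (C₂ * y₂)
  rw [← hs] at habs
  have hsle : s ≤ 1 := le_of_abs_le habs
  have hsge : -1 ≤ s := neg_le_of_abs_le habs
  have hβ' : 0 < C₀ / β := div_pos hC₀ hβ
  have heq : C₀ * ρ / (2 * β) = C₀ / β * (ρ / 2) := by field_simp
  constructor
  · rcases lt_abs.mp hξ with hpos | hneg
    · -- ξ > (3/2) ρ
      have hξpos : 0 < ξ := by nlinarith
      have hhalf : ρ / 2 ≤ ξ + ρ * s := by nlinarith
      have harg : C₀ * ρ / (2 * β) ≤ (C₀ / β) * (ξ + ρ * s) := by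
        rw [heq]; exact mul_le_mul_of_nonneg_left hhalf hβ'.le
      have hmono := sat_mono harg
      rw [← hts] at hmono
      nlinarith [mul_le_mul_of_nonneg_left hmono (mul_pos hξpos hβ).le,
        mul_lt_mul_of_pos_right (show (ρ:ℝ)/2 < ξ by linarith) (mul_pos hβ ht)]
    · -- ξ < -(3/2) ρ
      have hneg' : ξ < -((3/2) * ρ) := by linarith
      have hhalf : ρ / 2 ≤ -(ξ + ρ * s) := by nlinarith
      have harg : (C₀ / β) * (ξ + ρ * s) ≤ -(C₀ * ρ / (2 * β)) := by
        rw [le_neg, heq, ← mul_neg]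
        exact mul_le_mul_of_nonneg_left hhalf hβ'.le
      have hmono := sat_mono harg
      rw [sat_neg, ← hts] at hmono
      nlinarith [mul_le_mul_of_nonneg_left hmono (show (0:ℝ) ≤ -(ξ * β) by nlinarith),
        mul_lt_mul_of_pos_right hneg' (mul_pos hβ ht)]
  · nlinarith [mul_pos (mul_pos hρ hβ) ht]
end

section
/- Define F(ξ) = ∫₀^ξ (sin s)/s ds (the sine integral). Then F is odd, and for all ξ with 0 < |ξ| ≤ 1: 1 − ξ²/18 ≤ F(ξ)/ξ ≤ 1. -/
noncomputable def F (ξ : ℝ) : ℝ :=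
  ∫ s in (0:ℝ)..ξ, if s = 0 then 1 else Real.sin s / s

open Real MeasureTheory

lemma g_meas : Measurable (fun s : ℝ => if s = 0 then (1:ℝ) else Real.sin s / s) := by
  apply Measurable.ite (measurableSet_eq) measurable_const
  exact Real.measurable_sin.div measurable_id

lemma g_abs_le (s : ℝ) : |if s = 0 then (1:ℝ) else Real.sin s / s| ≤ 1 := by
  by_cases h : s = 0
  · simp [h]
  · rw [if_neg h, abs_div, div_le_one (abs_pos.mpr h)]
    exact Real.abs_sin_le_abs

lemma g_ii (a b : ℝ) : IntervalIntegrable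
    (fun s : ℝ => if s = 0 then (1:ℝ) else Real.sin s / s) volume a b := by
  constructor <;>
  · apply MeasureTheory.Integrable.mono' (g := fun _ => (1:ℝ))
      (integrableOn_const measure_Ioc_lt_top.ne)
      (g_meas.aestronglyMeasurable.restrict)
    exact Filter.Eventually.of_forall fun s => g_abs_le s

lemma sin_ge (s : ℝ) (hs : 0 ≤ s) : s - s ^ 3 / 6 ≤ Real.sin s := by
  have h1 : Real.sin s - Real.sin 0 = ∫ t in (0:ℝ)..s, Real.cos t := by
    rw [integral_cos]
  have h2 : (∫ t in (0:ℝ)..s, (1 - t ^ 2 / 2)) = s - s ^ 3 / 6 := by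
    rw [intervalIntegral.integral_sub intervalIntegrable_const
      ((intervalIntegral.intervalIntegrable_pow 2).div_const 2),
      intervalIntegral.integral_div, integral_pow, intervalIntegral.integral_const]
    simp [smul_eq_mul]; ring
  have h3 : (∫ t in (0:ℝ)..s, (1 - t ^ 2 / 2)) ≤ ∫ t in (0:ℝ)..s, Real.cos t := by
    apply intervalIntegral.integral_mono_on hs
      (intervalIntegrable_const.sub ((intervalIntegral.intervalIntegrable_pow 2).div_const 2))
      (Real.continuous_cos.intervalIntegrable 0 s)
    intro t _
    exact Real.one_sub_sq_div_two_le_cos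
  rw [Real.sin_zero, sub_zero] at h1
  linarith

lemma F_pos_bounds (ξ : ℝ) (h0 : 0 < ξ) (h1 : ξ ≤ 1) :
    ξ - ξ ^ 3 / 18 ≤ F ξ ∧ F ξ ≤ ξ := by
  constructor
  · have h2 : (∫ s in (0:ℝ)..ξ, (1 - s ^ 2 / 6)) = ξ - ξ ^ 3 / 18 := by
      rw [intervalIntegral.integral_sub intervalIntegrable_const
        ((intervalIntegral.intervalIntegrable_pow 2).div_const 6),
        intervalIntegral.integral_div, integral_pow, intervalIntegral.integral_const]
      simp [smul_eq_mul]; ring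
    have hm : (∫ s in (0:ℝ)..ξ, (1 - s ^ 2 / 6)) ≤ F ξ := by
      apply intervalIntegral.integral_mono_on h0.le
        (intervalIntegrable_const.sub ((intervalIntegral.intervalIntegrable_pow 2).div_const 6))
        (g_ii 0 ξ)
      intro s hs
      by_cases h : s = 0
      · simp [h]
      · rw [if_neg h]
        have hs0 : 0 < s := lt_of_le_of_ne hs.1 (Ne.symm h)
        rw [le_div_iff₀ hs0]
        have := sin_ge s hs0.le
        nlinarith
    linarith [h2 ▸ hm]
  · have h2 : (∫ s in (0:ℝ)..ξ, (1:ℝ)) = ξ := by simp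
    have hm : F ξ ≤ ∫ s in (0:ℝ)..ξ, (1:ℝ) := by
      apply intervalIntegral.integral_mono_on h0.le (g_ii 0 ξ) intervalIntegrable_const
      intro s hs
      by_cases h : s = 0
      · simp [h]
      · rw [if_neg h]
        have hs0 : 0 < s := lt_of_le_of_ne hs.1 (Ne.symm h)
        rw [div_le_one hs0]
        exact Real.sin_le hs0.le
    linarith [h2 ▸ hm]

lemma F_odd (ξ : ℝ) : F (-ξ) = -F ξ := by
  unfold F
  have h := intervalIntegral.integral_comp_neg (a := 0) (b := ξ)
    (fun s => if s = 0 then (1:ℝ) else Real.sin s / s)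
  simp only [neg_zero] at h
  rw [intervalIntegral.integral_symm, ← h]
  congr 1
  apply intervalIntegral.integral_congr
  intro s _
  by_cases hs : s = 0
  · simp [hs]
  · simp only [if_neg hs, if_neg (neg_ne_zero.mpr hs), Real.sin_neg, neg_div_neg_eq]

theorem F_odd_and_bounds :
    (∀ ξ : ℝ, F (-ξ) = -F ξ) ∧
    (∀ ξ : ℝ, ξ ≠ 0 → |ξ| ≤ 1 →
      1 - ξ ^ 2 / 18 ≤ F ξ / ξ ∧ F ξ / ξ ≤ 1) := by
  refine ⟨F_odd, fun ξ hne h1 => ?_⟩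
  rcases lt_or_gt_of_ne hne with hneg | hpos
  · have h1' : -ξ ≤ 1 := by rwa [abs_of_neg hneg] at h1
    obtain ⟨hl, hr⟩ := F_pos_bounds (-ξ) (by linarith) h1'
    rw [F_odd] at hl hr
    constructor
    · rw [le_div_iff_of_neg hneg]
      nlinarith
    · rw [div_le_iff_of_neg hneg]
      linarith
  · have h1' : ξ ≤ 1 := by rwa [abs_of_pos hpos] at h1
    obtain ⟨hl, hr⟩ := F_pos_bounds ξ hpos h1'
    constructor
    · rw [le_div_iff₀ hpos]; nlinarith
    · rw [div_le_one hpos]; linarith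
end
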